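/- Let M be a symmetric positive-definite d×d real matrix and let v_1, …, v_{2n} be vectors in ℝ^d. Set v = ( ∑_{k=1}^{n} v_k − ∑_{k=n+1}^{2n} v_k ) / 2. Then ∑_{k=1}^{2n} det(M + Q_{v_k})^{1/2} ≥ 2 · det(M + Q_v)^{1/2}, where for a vector w ∈ ℝ^d, Q_w denotes the d×d matrix with entries (Q_w)_{ij} = w_i w_j (the outer product w wᵀ). Moreover, equality holds if and only if n = 1 and v_1 = −v_2. -/

import Mathlib

open Matrix

/-- `Q w` is the rank-one matrix with entries `(Q w) i j = w i * w j`. -/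
def outerQ {d : ℕ} (w : Fin d → ℝ) : Matrix (Fin d) (Fin d) ℝ :=
  Matrix.vecMulVec w w

namespace StmtAux

variable {d : ℕ}

lemma outerQ_neg (w : Fin d → ℝ) : outerQ (-w) = outerQ w := by
  ext i j
  simp [outerQ, Matrix.vecMulVec_apply]

lemma posDef_smul {A : Matrix (Fin d) (Fin d) ℝ} (hA : A.PosDef) {a : ℝ} (ha : 0 < a) :
    (a • A).PosDef := by
  refine Matrix.PosDef.of_dotProduct_mulVec_pos ?_ fun x hx => ?_
  · rw [Matrix.IsHermitian, conjTranspose_smul, hA.1.eq, star_trivial]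
  · rw [smul_mulVec, dotProduct_smul, smul_eq_mul]
    exact mul_pos ha (hA.dotProduct_mulVec_pos hx)

lemma det_add_outerQ {M : Matrix (Fin d) (Fin d) ℝ} (hM : M.PosDef) (w : Fin d → ℝ) :
    (M + outerQ w).det = M.det * (1 + w ⬝ᵥ M⁻¹ *ᵥ w) := by
  rw [outerQ, vecMulVec_eq Unit, Matrix.det_add_replicateCol_mul_replicateRow hM.det_pos.ne'.isUnit]
  congr 1
  rw [← Matrix.replicateRow_vecMul, Matrix.det_unique, Matrix.add_apply, Matrix.one_apply_eq,
    Matrix.replicateRow_mul_replicateCol_apply, dotProduct_mulVec]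

variable {M : Matrix (Fin d) (Fin d) ℝ}

lemma hNN (hM : M.PosDef) : (M.det • M⁻¹).PosDef := posDef_smul hM.inv hM.det_pos

open scoped MatrixOrder in
noncomputable def SS (hM : M.PosDef) : Matrix (Fin d) (Fin d) ℝ :=
  CFC.sqrt (M.det • M⁻¹)

open scoped MatrixOrder in
lemma SS_mul_SS (hM : M.PosDef) : SS hM * SS hM = M.det • M⁻¹ :=
  CFC.sqrt_mul_sqrt_self _ (hNN hM).posSemidef.nonneg

open scoped MatrixOrder in
lemma SS_transpose (hM : M.PosDef) : (SS hM)ᵀ = SS hM := by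
  rw [← conjTranspose_eq_transpose_of_trivial]
  exact (CFC.sqrt_nonneg (M.det • M⁻¹)).posSemidef.1

lemma SS_mulVec_eq_vecMul (hM : M.PosDef) (w : Fin d → ℝ) :
    SS hM *ᵥ w = w ᵥ* SS hM := by
  conv_rhs => rw [← SS_transpose hM, vecMul_transpose]

lemma dotN (hM : M.PosDef) (w : Fin d → ℝ) :
    w ⬝ᵥ (M.det • M⁻¹) *ᵥ w = (SS hM *ᵥ w) ⬝ᵥ (SS hM *ᵥ w) := by
  rw [← SS_mul_SS hM, ← mulVec_mulVec, dotProduct_mulVec, ← SS_mulVec_eq_vecMul hM]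

lemma dot_SS (hM : M.PosDef) (w : Fin d → ℝ) :
    (SS hM *ᵥ w) ⬝ᵥ (SS hM *ᵥ w) = M.det * (w ⬝ᵥ M⁻¹ *ᵥ w) := by
  rw [← dotN hM, smul_mulVec, dotProduct_smul, smul_eq_mul]

noncomputable def eE : (Fin d → ℝ) ≃ₗ[ℝ] EuclideanSpace ℝ (Fin d) :=
  (WithLp.linearEquiv 2 ℝ (Fin d → ℝ)).symm

noncomputable def eP :
    (ℝ × EuclideanSpace ℝ (Fin d)) ≃ₗ[ℝ] WithLp 2 (ℝ × EuclideanSpace ℝ (Fin d)) :=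
  (WithLp.linearEquiv 2 ℝ _).symm

lemma norm_eP (a : ℝ) (b : EuclideanSpace ℝ (Fin d)) :
    ‖eP (a, b)‖ = Real.sqrt (a ^ 2 + ‖b‖ ^ 2) := by
  rw [WithLp.prod_norm_eq_of_L2]
  show Real.sqrt (‖a‖ ^ 2 + ‖b‖ ^ 2) = _
  rw [Real.norm_eq_abs, sq_abs]

lemma norm_eE_sq (u : Fin d → ℝ) : ‖(eE u : EuclideanSpace ℝ (Fin d))‖ ^ 2 = u ⬝ᵥ u := by
  rw [EuclideanSpace.norm_eq, Real.sq_sqrt (by positivity)]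
  simp [dotProduct, Real.norm_eq_abs, sq_abs, sq, eE, PiLp.toLp_apply]

noncomputable def pt (hM : M.PosDef) (w : Fin d → ℝ) :
    WithLp 2 (ℝ × EuclideanSpace ℝ (Fin d)) :=
  eP (Real.sqrt M.det, eE (SS hM *ᵥ w))

lemma norm_pt' (hM : M.PosDef) (w : Fin d → ℝ) :
    ‖pt hM w‖ = Real.sqrt (Real.sqrt M.det ^ 2 +
      ‖(eE (SS hM *ᵥ w) : EuclideanSpace ℝ (Fin d))‖ ^ 2) :=
  norm_eP _ _

lemma norm_pt (hM : M.PosDef) (w : Fin d → ℝ) :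
    ‖pt hM w‖ = Real.sqrt ((M + outerQ w).det) := by
  rw [norm_pt', norm_eE_sq, dot_SS hM, Real.sq_sqrt hM.det_pos.le, det_add_outerQ hM]
  congr 1
  ring

lemma pt_ne_zero (hM : M.PosDef) (w : Fin d → ℝ) : pt hM w ≠ 0 := by
  have h : 0 < ‖pt hM w‖ := by
    rw [norm_pt']
    apply Real.sqrt_pos.mpr
    have : 0 < Real.sqrt M.det := Real.sqrt_pos.mpr hM.det_pos
    positivity
  exact fun hz => h.ne' (by rw [hz, norm_zero])

end StmtAux

set_option maxHeartbeats 1000000 in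
open StmtAux in
theorem stmt_1 (d n : ℕ) (hn : 1 ≤ n)
    (M : Matrix (Fin d) (Fin d) ℝ) (hM : M.PosDef)
    (v : Fin (2 * n) → (Fin d → ℝ)) :
    2 * Real.sqrt (Matrix.det (M + outerQ
        ((1 / 2 : ℝ) • ∑ k : Fin (2 * n), if (k : ℕ) < n then v k else -v k))) ≤
      ∑ k : Fin (2 * n), Real.sqrt (Matrix.det (M + outerQ (v k))) ∧
    ((∑ k : Fin (2 * n), Real.sqrt (Matrix.det (M + outerQ (v k))) =
        2 * Real.sqrt (Matrix.det (M + outerQ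
          ((1 / 2 : ℝ) • ∑ k : Fin (2 * n), if (k : ℕ) < n then v k else -v k)))) ↔
      (n = 1 ∧ v ⟨0, by omega⟩ = -v ⟨1, by omega⟩)) := by
  classical
  have hdet := hM.det_pos
  set c : ℝ := Real.sqrt M.det with hc
  have hc0 : 0 < c := Real.sqrt_pos.mpr hdet
  set x : Fin (2 * n) → (Fin d → ℝ) := fun k => if (k : ℕ) < n then v k else -v k with hxdef
  set vs : Fin d → ℝ := (1 / 2 : ℝ) • ∑ k, x k with hvs
  have hxsum : ∑ k, x k = (2 : ℝ) • vs := by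
    rw [hvs, smul_smul]
    norm_num
  have hdet_eq : ∀ k, (M + outerQ (x k)).det = (M + outerQ (v k)).det := by
    intro k
    by_cases h : (k : ℕ) < n
    · simp [hxdef, h]
    · simp [hxdef, h, outerQ_neg]
  -- the linear part of pt
  set L : (Fin d → ℝ) →ₗ[ℝ] ℝ × EuclideanSpace ℝ (Fin d) :=
    LinearMap.prod 0 (eE.toLinearMap ∘ₗ Matrix.mulVecLin (SS hM)) with hL
  have hLa : ∀ w, L w = ((0 : ℝ), eE (SS hM *ᵥ w)) := fun w => rfl
  have key : ∀ w, pt hM w = eP (c, 0) + eP (L w) := by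
    intro w
    rw [← map_add]
    show eP (c, eE (SS hM *ᵥ w)) = _
    rw [hLa, Prod.mk_add_mk, add_zero, zero_add]
  have hptsum : ∑ k, pt hM (x k) = eP (((2 * n : ℕ) : ℝ) * c, (2 : ℝ) • eE (SS hM *ᵥ vs)) := by
    rw [Finset.sum_congr rfl fun k _ => key (x k), Finset.sum_add_distrib, Finset.sum_const,
      Finset.card_univ, Fintype.card_fin, ← map_sum, ← map_sum, hxsum, ← map_nsmul, ← map_add]
    congr 1
    rw [_root_.map_smul, hLa, Prod.smul_mk, Prod.smul_mk, Prod.mk_add_mk, smul_zero, smul_zero,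
      add_zero, zero_add, nsmul_eq_mul]
  set B : ℝ := ‖(eE (SS hM *ᵥ vs) : EuclideanSpace ℝ (Fin d))‖ with hB
  have hnorm_sum : ‖∑ k, pt hM (x k)‖ = Real.sqrt ((2 * (n : ℝ)) ^ 2 * c ^ 2 + 4 * B ^ 2) := by
    rw [hptsum, norm_eP]
    congr 2
    · push_cast
      ring
    · rw [norm_smul]
      rw [Real.norm_ofNat]
      ring
  have hpt_vs : ‖pt hM vs‖ = Real.sqrt (c ^ 2 + B ^ 2) := norm_pt' hM vs
  have hRHS : 2 * Real.sqrt ((M + outerQ vs).det) = Real.sqrt (4 * c ^ 2 + 4 * B ^ 2) := by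
    rw [← norm_pt hM, hpt_vs, show (4 : ℝ) * c ^ 2 + 4 * B ^ 2 = 2 ^ 2 * (c ^ 2 + B ^ 2) by ring,
      Real.sqrt_mul (by positivity), Real.sqrt_sq (by norm_num : (0:ℝ) ≤ 2)]
  have hn1R : (1 : ℝ) ≤ (n : ℝ) := by exact_mod_cast hn
  have hmono : Real.sqrt (4 * c ^ 2 + 4 * B ^ 2) ≤ ‖∑ k, pt hM (x k)‖ := by
    rw [hnorm_sum]
    apply Real.sqrt_le_sqrt
    have h4 : (4 : ℝ) ≤ (2 * (n : ℝ)) ^ 2 := by nlinarith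
    nlinarith [mul_le_mul_of_nonneg_right h4 (sq_nonneg c)]
  have htri : ‖∑ k, pt hM (x k)‖ ≤ ∑ k, ‖pt hM (x k)‖ := norm_sum_le _ _
  have hsum_rw : ∑ k, Real.sqrt ((M + outerQ (v k)).det) = ∑ k, ‖pt hM (x k)‖ :=
    Finset.sum_congr rfl fun k _ => by rw [← hdet_eq k, norm_pt hM]
  constructor
  · rw [hRHS, hsum_rw]
    exact le_trans hmono htri
  constructor
  · -- forward direction of iff
    intro h
    rw [hsum_rw, hRHS] at h
    have hEq1 : ‖∑ k, pt hM (x k)‖ = Real.sqrt (4 * c ^ 2 + 4 * B ^ 2) :=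
      le_antisymm (htri.trans h.le) hmono
    have hEq2 : ∑ k, ‖pt hM (x k)‖ = ‖∑ k, pt hM (x k)‖ := by rw [hEq1, h]
    have hsq : (2 * (n : ℝ)) ^ 2 * c ^ 2 + 4 * B ^ 2 = 4 * c ^ 2 + 4 * B ^ 2 := by
      have h' := hEq1
      rw [hnorm_sum] at h'
      exact (Real.sqrt_inj (by positivity) (by positivity)).mp h'
    have hn1 : n = 1 := by
      have hcsq : 0 < c ^ 2 := by positivity
      have h2n : (2 * (n : ℝ)) ^ 2 = 4 :=
        mul_right_cancel₀ hcsq.ne' (by linear_combination hsq)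
      have : (n : ℝ) = 1 := by nlinarith [h2n, hn1R, sq_nonneg ((n : ℝ) - 1)]
      exact_mod_cast this
    subst hn1
    refine ⟨rfl, ?_⟩
    set k0 : Fin (2 * 1) := ⟨0, by omega⟩ with hk0
    set k1 : Fin (2 * 1) := ⟨1, by omega⟩ with hk1
    have hne : k0 ≠ k1 := by simp [hk0, hk1, Fin.ext_iff]
    have huniv : (Finset.univ : Finset (Fin (2 * 1))) = {k0, k1} := by decide
    have heq2 : ‖pt hM (x k0) + pt hM (x k1)‖ = ‖pt hM (x k0)‖ + ‖pt hM (x k1)‖ := by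
      have h2 := hEq2
      rw [huniv, Finset.sum_pair hne, Finset.sum_pair hne] at h2
      exact h2.symm
    have hray : SameRay ℝ (pt hM (x k0)) (pt hM (x k1)) := sameRay_iff_norm_add.mpr heq2
    obtain ⟨r, s, hr, hs, hrs⟩ := hray.exists_pos (pt_ne_zero hM _) (pt_ne_zero hM _)
    have hrs' : (r • ((c, eE (SS hM *ᵥ x k0)) : ℝ × EuclideanSpace ℝ (Fin d))) =
        s • (c, eE (SS hM *ᵥ x k1)) := by
      apply eP.injective
      rw [_root_.map_smul, _root_.map_smul]
      exact hrs
    have hr_eq_s : r = s := by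
      have h1 := congrArg Prod.fst hrs'
      simp only [Prod.smul_mk, smul_eq_mul] at h1
      exact mul_right_cancel₀ hc0.ne' h1
    subst hr_eq_s
    have hpt_eq : pt hM (x k0) = pt hM (x k1) := smul_right_injective _ hr.ne' hrs
    have hSx : SS hM *ᵥ x k0 = SS hM *ᵥ x k1 := by
      have h2 : ((c, eE (SS hM *ᵥ x k0)) : ℝ × EuclideanSpace ℝ (Fin d)) =
          (c, eE (SS hM *ᵥ x k1)) := eP.injective hpt_eq
      exact eE.injective (congrArg Prod.snd h2)
    have hx01 : x k0 = x k1 := by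
      by_contra hne2
      have hq := (hNN hM).dotProduct_mulVec_pos (sub_ne_zero.mpr hne2)
      rw [star_trivial] at hq
      have hz : SS hM *ᵥ (x k0 - x k1) = 0 := by
        rw [Matrix.mulVec_sub, hSx, sub_self]
      have h0 : (x k0 - x k1) ⬝ᵥ (M.det • M⁻¹) *ᵥ (x k0 - x k1) = 0 := by
        rw [dotN hM, hz, dotProduct_zero]
      exact absurd h0 hq.ne'
    have hx0 : x k0 = v k0 := by simp [hxdef, hk0]
    have hx1 : x k1 = -v k1 := by simp [hxdef, hk1]
    rw [hx0, hx1] at hx01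
    exact hx01
  · -- backward direction of iff
    rintro ⟨hn1, hveq⟩
    subst hn1
    set k0 : Fin (2 * 1) := ⟨0, by omega⟩ with hk0
    set k1 : Fin (2 * 1) := ⟨1, by omega⟩ with hk1
    have hne : k0 ≠ k1 := by simp [hk0, hk1, Fin.ext_iff]
    have huniv : (Finset.univ : Finset (Fin (2 * 1))) = {k0, k1} := by decide
    have hveq' : v k0 = -v k1 := hveq
    have hx0 : x k0 = v k0 := by simp [hxdef, hk0]
    have hx1 : x k1 = -v k1 := by simp [hxdef, hk1]
    have hvs0 : vs = v k0 := by
      rw [hvs, huniv, Finset.sum_pair hne, hx0, hx1, ← hveq', ← two_smul ℝ (v k0), smul_smul]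
      norm_num
    have hQ : outerQ (v k1) = outerQ (v k0) := by rw [hveq', outerQ_neg]
    rw [huniv, Finset.sum_pair hne, hQ, hvs0]
    ring
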